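/- For the complete graph K_n on n vertices with unit edge weights, every rooted binary tree T whose leaves are in bijection with the vertices has hierarchical clustering cost exactly (n^3 - n)/3, where the cost is the sum over all vertex pairs {i,j} of the number of leaves of the subtree rooted at the lowest common ancestor of i and j. -/

import Mathlib

open Finset

/-- A rooted binary tree whose leaves are labeled by elements of `Fin n`. -/
inductive HTree (n : ℕ) : Type where
  | leaf : Fin n → HTree n
  | node : HTree n → HTree n → HTree n

namespace HTree

variable {n : ℕ}

/-- The list of leaf labels, left to right. -/
def leafList : HTree n → List (Fin n)
  | .leaf v => [v]
  | .node l r => l.leafList ++ r.leafList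

/-- The set of leaf labels of a tree. -/
def leaves (T : HTree n) : Finset (Fin n) := T.leafList.toFinset

/-- `T` is a hierarchical clustering tree of the whole vertex set `Fin n`:
its leaves are in one-to-one correspondence with `Fin n`. -/
def IsFullTree (T : HTree n) : Prop := T.leafList.Nodup ∧ T.leaves = Finset.univ

/-- `|leaves(T[i ∨ j])|`: the number of leaves of the subtree rooted at the
lowest common ancestor of leaves `i` and `j`. -/
def lcaSize : HTree n → Fin n → Fin n → ℕ
  | .leaf _, _, _ => 1
  | .node l r, i, j =>
    if i ∈ l.leaves ∧ j ∈ l.leaves then l.lcaSize i j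
    else if i ∈ r.leaves ∧ j ∈ r.leaves then r.lcaSize i j
    else (l.leaves ∪ r.leaves).card

/-- `cost_G(T) = Σ_{{i,j}} w_{ij} |leaves(T[i ∨ j])|`, the sum being over
unordered pairs (represented as ordered pairs `p.1 < p.2`). -/
def pairCost (w : Fin n → Fin n → ℝ) (T : HTree n) : ℝ :=
  ∑ p ∈ Finset.univ.filter (fun p : Fin n × Fin n => p.1 < p.2),
    w p.1 p.2 * (T.lcaSize p.1 p.2 : ℝ)

/-- `w(A, B)`: total weight of edges between `A` and `B`. -/
def cut (w : Fin n → Fin n → ℝ) (A B : Finset (Fin n)) : ℝ :=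
  ∑ i ∈ A, ∑ j ∈ B, w i j

/-- The sum-of-splits formulation of the cost:
`Σ over internal splits S → (S₁,S₂) of |S| ⬝ w(S₁,S₂)`. -/
def splitCost (w : Fin n → Fin n → ℝ) : HTree n → ℝ
  | .leaf _ => 0
  | .node l r =>
      ((l.leaves ∪ r.leaves).card : ℝ) * cut w l.leaves r.leaves
        + splitCost w l + splitCost w r

/-- `Subtree t T`: `t` occurs as a subtree of `T`. -/
inductive Subtree : HTree n → HTree n → Prop
  | refl (t : HTree n) : Subtree t t
  | left {t l r : HTree n} : Subtree t l → Subtree t (.node l r)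
  | right {t l r : HTree n} : Subtree t r → Subtree t (.node l r)

lemma leaves_node (l r : HTree n) : (node l r).leaves = l.leaves ∪ r.leaves := by
  simp [leaves, leafList]

lemma lcaSize_comm (t : HTree n) (i j : Fin n) : t.lcaSize i j = t.lcaSize j i := by
  induction t with
  | leaf v => rfl
  | node l r ihl ihr =>
    simp only [lcaSize, ihl, ihr]
    exact if_congr and_comm rfl (if_congr and_comm rfl rfl)

lemma lcaSize_self (t : HTree n) (i : Fin n) (h : i ∈ t.leaves) : t.lcaSize i i = 1 := by
  induction t with
  | leaf v => rfl
  | node l r ihl ihr =>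
    rw [leaves_node, Finset.mem_union] at h
    by_cases hl : i ∈ l.leaves
    · simp [lcaSize, hl, ihl hl]
    · have hr : i ∈ r.leaves := h.resolve_left hl
      simp [lcaSize, hl, hr, ihr hr]

/-- Sum of `lcaSize` over all ordered pairs of leaves. -/
def F (t : HTree n) : ℕ := ∑ i ∈ t.leaves, ∑ j ∈ t.leaves, t.lcaSize i j

lemma F_eq (t : HTree n) (h : t.leafList.Nodup) :
    3 * F t = 2 * t.leaves.card ^ 3 + t.leaves.card := by
  induction t with
  | leaf v => simp [F, leaves, leafList, lcaSize]
  | node l r ihl ihr =>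
    rw [leafList, List.nodup_append] at h
    obtain ⟨hl, hr, hdisj⟩ := h
    have hd : Disjoint l.leaves r.leaves := by
      rw [Finset.disjoint_left]
      intro a ha hb
      exact hdisj a (List.mem_toFinset.1 ha) a (List.mem_toFinset.1 hb) rfl
    have hnotl : ∀ i ∈ r.leaves, i ∉ l.leaves := fun i hi hil =>
      Finset.disjoint_left.1 hd hil hi
    have hnotr : ∀ i ∈ l.leaves, i ∉ r.leaves := fun i hi =>
      Finset.disjoint_left.1 hd hi
    have hcard : (l.leaves ∪ r.leaves).card = l.leaves.card + r.leaves.card :=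
      Finset.card_union_of_disjoint hd
    set a := l.leaves.card with ha
    set b := r.leaves.card with hb
    have hF : F (node l r) = F l + F r + 2 * (a * b * (a + b)) := by
      rw [F, leaves_node, Finset.sum_union hd]
      have h1 : ∀ i ∈ l.leaves,
          (∑ j ∈ l.leaves ∪ r.leaves, (node l r).lcaSize i j)
            = (∑ j ∈ l.leaves, l.lcaSize i j) + b * (a + b) := by
        intro i hi
        rw [Finset.sum_union hd]
        congr 1
        · exact Finset.sum_congr rfl fun j hj => by
            simp [lcaSize, hi, hj]
        · have hval : ∀ j ∈ r.leaves, (node l r).lcaSize i j = a + b := by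
            intro j hj
            have hx : ¬ (i ∈ l.leaves ∧ j ∈ l.leaves) := fun hh => hnotl j hj hh.2
            have hy : ¬ (i ∈ r.leaves ∧ j ∈ r.leaves) := fun hh => hnotr i hi hh.1
            rw [show (node l r).lcaSize i j = (l.leaves ∪ r.leaves).card by
              simp [lcaSize, hx, hy], hcard]
          rw [Finset.sum_congr rfl hval, Finset.sum_const, smul_eq_mul, ← hb]
      have h2 : ∀ i ∈ r.leaves,
          (∑ j ∈ l.leaves ∪ r.leaves, (node l r).lcaSize i j)
            = (∑ j ∈ r.leaves, r.lcaSize i j) + a * (a + b) := by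
        intro i hi
        rw [Finset.sum_union hd, add_comm (∑ j ∈ l.leaves, _)]
        congr 1
        · exact Finset.sum_congr rfl fun j hj => by
            have hni : i ∉ l.leaves := hnotl i hi
            simp [lcaSize, hni, hi, hj]
        · have hval : ∀ j ∈ l.leaves, (node l r).lcaSize i j = a + b := by
            intro j hj
            have hx : ¬ (i ∈ l.leaves ∧ j ∈ l.leaves) := fun hh => hnotl i hi hh.1
            have hy : ¬ (i ∈ r.leaves ∧ j ∈ r.leaves) := fun hh => hnotr j hj hh.2
            rw [show (node l r).lcaSize i j = (l.leaves ∪ r.leaves).card by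
              simp [lcaSize, hx, hy], hcard]
          rw [Finset.sum_congr rfl hval, Finset.sum_const, smul_eq_mul, ← ha]
      rw [Finset.sum_congr rfl h1, Finset.sum_congr rfl h2, Finset.sum_add_distrib,
        Finset.sum_add_distrib, Finset.sum_const, Finset.sum_const, smul_eq_mul, smul_eq_mul]
      show F l + a * (b * (a + b)) + (F r + b * (a * (a + b))) = _
      ring
    rw [hF, leaves_node, hcard, mul_add, mul_add, ihl hl, ihr hr]
    ring

end HTree

/-- For the complete graph `K_n` with unit edge weights, every rooted binary tree
whose leaves are in bijection with the vertices has cost exactly `(n³ - n)/3`. -/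
theorem complete_graph_cost (n : ℕ) (T : HTree n) (hT : T.IsFullTree) :
    T.pairCost (fun _ _ => 1) = ((n : ℝ) ^ 3 - n) / 3 := by
  classical
  obtain ⟨hnd, hleaves⟩ := hT
  set S : ℕ := ∑ p ∈ Finset.univ.filter (fun p : Fin n × Fin n => p.1 < p.2),
      T.lcaSize p.1 p.2 with hS
  -- total ordered sum
  have htot : ∑ p : Fin n × Fin n, T.lcaSize p.1 p.2 = 2 * S + n := by
    rw [← Finset.sum_filter_add_sum_filter_not Finset.univ
        (fun p : Fin n × Fin n => p.1 < p.2),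
      ← Finset.sum_filter_add_sum_filter_not
        (Finset.univ.filter (fun p : Fin n × Fin n => ¬ p.1 < p.2))
        (fun p : Fin n × Fin n => p.2 < p.1)]
    have hgt : ∑ p ∈ (Finset.univ.filter (fun p : Fin n × Fin n => ¬ p.1 < p.2)).filter
        (fun p : Fin n × Fin n => p.2 < p.1), T.lcaSize p.1 p.2 = S := by
      rw [Finset.filter_filter, hS, Finset.sum_filter, Finset.sum_filter]
      refine Fintype.sum_equiv (Equiv.prodComm (Fin n) (Fin n)) _ _ fun p => ?_
      by_cases h : p.2 < p.1
      · simp [h, not_lt_of_gt h, T.lcaSize_comm p.1 p.2]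
      · simp [h]
    have hdiag : ∑ p ∈ (Finset.univ.filter (fun p : Fin n × Fin n => ¬ p.1 < p.2)).filter
        (fun p : Fin n × Fin n => ¬ p.2 < p.1), T.lcaSize p.1 p.2 = n := by
      rw [Finset.filter_filter]
      have hset : (Finset.univ.filter
          (fun p : Fin n × Fin n => ¬ p.1 < p.2 ∧ ¬ p.2 < p.1))
          = Finset.univ.image (fun i : Fin n => (i, i)) := by
        ext p
        simp only [Finset.mem_filter, Finset.mem_univ, true_and, Finset.mem_image]
        constructor
        · rintro ⟨h1, h2⟩
          exact ⟨p.1, Prod.ext rfl (le_antisymm (not_lt.1 h2) (not_lt.1 h1))⟩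
        · rintro ⟨i, rfl⟩
          simp
      rw [hset, Finset.sum_image (by simp; exact fun i j h => congrArg Prod.fst h)]
      have : ∀ i : Fin n, T.lcaSize i i = 1 := fun i =>
        T.lcaSize_self i (by rw [hleaves]; exact Finset.mem_univ i)
      simp [this]
    rw [hgt, hdiag]
    ring
  -- combine with F_eq
  have hFval : HTree.F T = ∑ p : Fin n × Fin n, T.lcaSize p.1 p.2 := by
    rw [HTree.F, hleaves, ← Finset.sum_product']
    rw [Finset.univ_product_univ]
  have hFeq := T.F_eq hnd
  rw [hleaves, Finset.card_univ, Fintype.card_fin] at hFeq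
  have hkey : 6 * S + 2 * n = 2 * n ^ 3 := by omega
  have hkeyR : (6 : ℝ) * S + 2 * n = 2 * n ^ 3 := by
    exact_mod_cast congrArg (fun m : ℕ => (m : ℝ)) hkey
  have hpc : T.pairCost (fun _ _ => 1) = (S : ℝ) := by
    rw [HTree.pairCost, hS]
    push_cast
    simp
  rw [hpc]
  linarith
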